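/- Let H₁, H₂ be Hilbert spaces, (aᵢ)ᵢ a sequence of pairwise orthogonal projections on H₁, and (bᵢ)ᵢ a sequence of pairwise orthogonal projections on H₂. Let s ∈ B(H₁, H₂) be a bounded operator, and suppose aᵢ s* bᵢ s aᵢ = aᵢ for all i. If p = ⋁ᵢ aᵢ (the projection onto the closed span of the ranges) and s₀ = Σᵢ bᵢ s aᵢ converges in the strong operator topology, then s₀* s₀ = p. -/

import Mathlib

open ContinuousLinearMap

/-- Let `(aᵢ)` and `(bᵢ)` be sequences of pairwise orthogonal (orthogonal) projections on
Hilbert spaces `H₁` and `H₂` respectively, and `s : H₁ → H₂` bounded with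
`aᵢ s* bᵢ s aᵢ = aᵢ` for all `i`.  If `p` is the strong sum `Σᵢ aᵢ` (the projection onto
the closed span of the ranges) and `s₀` is the strong sum `Σᵢ bᵢ s aᵢ`, then
`s₀* s₀ = p`. -/
theorem stmt_11 {H₁ H₂ : Type*}
    [NormedAddCommGroup H₁] [InnerProductSpace ℂ H₁] [CompleteSpace H₁]
    [NormedAddCommGroup H₂] [InnerProductSpace ℂ H₂] [CompleteSpace H₂]
    (a : ℕ → H₁ →L[ℂ] H₁) (b : ℕ → H₂ →L[ℂ] H₂)
    (ha_sa : ∀ i, IsSelfAdjoint (a i)) (ha_idem : ∀ i, a i ∘L a i = a i)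
    (ha_orth : ∀ i j, i ≠ j → a i ∘L a j = 0)
    (hb_sa : ∀ i, IsSelfAdjoint (b i)) (hb_idem : ∀ i, b i ∘L b i = b i)
    (hb_orth : ∀ i j, i ≠ j → b i ∘L b j = 0)
    (s : H₁ →L[ℂ] H₂)
    (hmid : ∀ i, a i ∘L adjoint s ∘L b i ∘L s ∘L a i = a i)
    (p : H₁ →L[ℂ] H₁) (hp : ∀ ξ : H₁, HasSum (fun i => a i ξ) (p ξ))
    (s₀ : H₁ →L[ℂ] H₂) (hs₀ : ∀ ξ : H₁, HasSum (fun i => b i (s (a i ξ))) (s₀ ξ)) :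
    adjoint s₀ ∘L s₀ = p := by
  -- key: b j (s₀ ξ) = b j (s (a j ξ))
  have key : ∀ (j : ℕ) (ξ : H₁), b j (s₀ ξ) = b j (s (a j ξ)) := by
    intro j ξ
    have h1 : HasSum (fun i => b j (b i (s (a i ξ)))) (b j (s₀ ξ)) :=
      (hs₀ ξ).mapL (b j)
    have h2 : HasSum (fun i => b j (b i (s (a i ξ)))) (b j (b j (s (a j ξ)))) := by
      apply hasSum_single (f := fun i => b j (b i (s (a i ξ)))) j
      intro i hij
      have := congrFun (congrArg DFunLike.coe (hb_orth j i (Ne.symm hij))) (s (a i ξ))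
      simpa using this
    have h3 : b j (b j (s (a j ξ))) = b j (s (a j ξ)) := by
      have := congrFun (congrArg DFunLike.coe (hb_idem j)) (s (a j ξ))
      simpa using this
    rw [← h3]
    exact h1.unique h2
  ext η
  apply ext_inner_left ℂ
  intro ξ
  have lhs : HasSum (fun j => (inner ℂ (s₀ ξ) (b j (s (a j η))) : ℂ))
      (inner ℂ (s₀ ξ) (s₀ η)) := (hs₀ η).mapL (innerSL ℂ (s₀ ξ))
  have rhs : HasSum (fun j => (inner ℂ ξ (a j η) : ℂ)) (inner ℂ ξ (p η)) :=
    (hp η).mapL (innerSL ℂ ξ)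
  have term : ∀ j, (inner ℂ (s₀ ξ) (b j (s (a j η))) : ℂ) = inner ℂ ξ (a j η) := by
    intro j
    have hbj : (inner ℂ (s₀ ξ) (b j (s (a j η))) : ℂ)
        = inner ℂ (b j (s₀ ξ)) (s (a j η)) := by
      rw [← adjoint_inner_left, (hb_sa j).adjoint_eq]
    rw [hbj, key j ξ]
    have hm := congrFun (congrArg DFunLike.coe (hmid j)) η
    simp only [ContinuousLinearMap.comp_apply] at hm
    have sa₂ : ∀ (x y : H₂), (inner ℂ (b j x) y : ℂ) = inner ℂ x (b j y) := fun x y => by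
      rw [← adjoint_inner_right, (hb_sa j).adjoint_eq]
    have sa₁ : ∀ (x y : H₁), (inner ℂ (a j x) y : ℂ) = inner ℂ x (a j y) := fun x y => by
      rw [← adjoint_inner_right, (ha_sa j).adjoint_eq]
    rw [sa₂, ← adjoint_inner_right (A := s), sa₁, hm]
  rw [ContinuousLinearMap.comp_apply, adjoint_inner_right]
  have lhs' : HasSum (fun j => (inner ℂ ξ (a j η) : ℂ)) (inner ℂ (s₀ ξ) (s₀ η)) := by
    simpa [term] using lhs
  exact lhs'.unique rhs
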